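/- (NDL UMVUE remark, unbiasedness) For every integer n ≥ 2, every x ∈ ℕ and every θ ∈ (0,1), ∑_{t=x}^∞ [(2+x)·(∑_{k=0}^{n−1} C(n−1,k)·C(2(n−1)−k+t−x−1, t−x)) / (∑_{k=0}^n C(n,k)·C(2n−k+t−1, t))] · (θ²/(1+θ))^n·(∑_{k=0}^n C(n,k)·C(2n−k+t−1, t))·(1−θ)^t = (θ²/(1+θ))·(2+x)·(1−θ)^x; that is, the NDL PMF estimator f̂(x) given in the paper's Remark is unbiased for the NDL PMF when T has the PMF of the sum of n i.i.d. NDL variables. -/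

import Mathlib

open scoped BigOperators

/-- Geometric series with binomial coefficients: `∑ s, C(N+s-1, s) q^s = 1/(1-q)^N`. -/
lemma ndl_aux_geom (N : ℕ) (hN : 1 ≤ N) {q : ℝ} (hq : ‖q‖ < 1) :
    HasSum (fun s : ℕ => ((N + s - 1).choose s : ℝ) * q ^ s) (1 / (1 - q) ^ N) := by
  have h := hasSum_choose_mul_geometric_of_norm_lt_one (𝕜 := ℝ) (N - 1) hq
  have hN' : N - 1 + 1 = N := Nat.succ_pred_eq_of_pos hN
  rw [hN'] at h
  convert h using 2 with s
  congr 1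
  have h1 : N + s - 1 = s + (N - 1) := by omega
  rw [h1]
  have := Nat.choose_symm (n := s + (N - 1)) (k := N - 1) (Nat.le_add_left _ _)
  rw [show s + (N - 1) - (N - 1) = s by omega] at this
  rw [this]

/-- Sum of the NDL convolution coefficients against the geometric weights. -/
lemma ndl_aux_sum (m : ℕ) (hm : 1 ≤ m) {θ : ℝ} (hθ : θ ∈ Set.Ioo (0 : ℝ) 1) :
    HasSum
      (fun s : ℕ =>
        (∑ k ∈ Finset.range (m + 1),
          (Nat.choose m k : ℝ) * (Nat.choose (2 * m - k + s - 1) s : ℝ)) * (1 - θ) ^ s)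
      (((1 + θ) / θ ^ 2) ^ m) := by
  obtain ⟨hθ0, hθ1⟩ := hθ
  have hq : ‖(1 - θ : ℝ)‖ < 1 := by
    rw [Real.norm_eq_abs, abs_lt]; constructor <;> linarith
  have hθne : θ ≠ 0 := ne_of_gt hθ0
  have key : ∀ k ∈ Finset.range (m + 1),
      HasSum (fun s : ℕ => (Nat.choose m k : ℝ) * (Nat.choose (2 * m - k + s - 1) s : ℝ)
        * (1 - θ) ^ s) ((Nat.choose m k : ℝ) * (1 / θ ^ (2 * m - k))) := by
    intro k hk
    simp only [Finset.mem_range] at hk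
    have hNk : 1 ≤ 2 * m - k := by omega
    have h := (ndl_aux_geom (2 * m - k) hNk hq).mul_left (Nat.choose m k : ℝ)
    simpa [mul_assoc, show (1 : ℝ) - (1 - θ) = θ by ring] using h
  have h := hasSum_sum (f := fun k (s : ℕ) => (Nat.choose m k : ℝ) *
      (Nat.choose (2 * m - k + s - 1) s : ℝ) * (1 - θ) ^ s)
    (s := Finset.range (m + 1)) key
  have heq : (∑ k ∈ Finset.range (m + 1), (Nat.choose m k : ℝ) * (1 / θ ^ (2 * m - k)))
      = ((1 + θ) / θ ^ 2) ^ m := by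
    have : ∀ k ∈ Finset.range (m + 1),
        (Nat.choose m k : ℝ) * (1 / θ ^ (2 * m - k))
          = (Nat.choose m k : ℝ) * θ ^ k / θ ^ (2 * m) := by
      intro k hk
      simp only [Finset.mem_range] at hk
      rw [eq_div_iff (by positivity)]
      rw [show 2 * m = (2 * m - k) + k by omega, pow_add]
      field_simp
      rw [Nat.add_sub_cancel]
    rw [Finset.sum_congr rfl this, ← Finset.sum_div]
    have hb : (∑ k ∈ Finset.range (m + 1), (Nat.choose m k : ℝ) * θ ^ k) = (1 + θ) ^ m := by
      rw [add_comm (1 : ℝ) θ, add_pow]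
      refine Finset.sum_congr rfl fun k hk => ?_
      rw [one_pow, mul_one, mul_comm]
    rw [hb, div_pow, pow_mul]
  rw [heq] at h
  convert h using 2 with s
  rw [Finset.sum_mul]

/-- NDL UMVUE remark, unbiasedness: For every integer `n ≥ 2`, every
`x ∈ ℕ` and every `θ ∈ (0,1)`,
`∑_{t=x}^∞ [(2+x)(∑_{k=0}^{n−1} C(n−1,k) C(2(n−1)−k+t−x−1, t−x)) /
            (∑_{k=0}^n C(n,k) C(2n−k+t−1, t))]
   · (θ²/(1+θ))^n (∑_{k=0}^n C(n,k) C(2n−k+t−1, t)) (1−θ)^t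
 = (θ²/(1+θ)) (2+x) (1−θ)^x`;
i.e. the NDL PMF estimator `f̂(x)` of the paper's Remark is unbiased for the NDL PMF when
`T` has the PMF of the sum of `n` i.i.d. NDL variables. -/
theorem ndl_pmf_estimator_unbiased (n : ℕ) (hn : 2 ≤ n) (x : ℕ)
    (θ : ℝ) (hθ : θ ∈ Set.Ioo (0 : ℝ) 1) :
    HasSum
      (fun t : ℕ =>
        (if x ≤ t then
            (2 + (x : ℝ)) *
              (∑ k ∈ Finset.range n,
                (Nat.choose (n - 1) k : ℝ) *
                  (Nat.choose (2 * (n - 1) - k + (t - x) - 1) (t - x) : ℝ)) /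
              (∑ k ∈ Finset.range (n + 1),
                (Nat.choose n k : ℝ) * (Nat.choose (2 * n - k + t - 1) t : ℝ))
          else 0) *
          ((θ ^ 2 / (1 + θ)) ^ n *
            (∑ k ∈ Finset.range (n + 1),
              (Nat.choose n k : ℝ) * (Nat.choose (2 * n - k + t - 1) t : ℝ)) *
            (1 - θ) ^ t))
      (θ ^ 2 / (1 + θ) * (2 + (x : ℝ)) * (1 - θ) ^ x) := by
  obtain ⟨hθ0, hθ1⟩ := hθ
  have h1θ : (0 : ℝ) < 1 + θ := by linarith
  -- denominator positivity
  have hden : ∀ t : ℕ, (0 : ℝ) <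
      ∑ k ∈ Finset.range (n + 1),
        (Nat.choose n k : ℝ) * (Nat.choose (2 * n - k + t - 1) t : ℝ) := by
    intro t
    apply Finset.sum_pos'
    · intro k _; positivity
    · refine ⟨0, Finset.mem_range.mpr (by omega), ?_⟩
      have h0 : 1 ≤ (2 * n - 0 + t - 1).choose t := by
        apply Nat.succ_le_of_lt
        apply Nat.choose_pos
        omega
      simp only [Nat.choose_zero_right, Nat.cast_one, one_mul]
      exact_mod_cast h0
  -- simplify summand
  set F : ℕ → ℝ := fun t =>
        (if x ≤ t then
            (2 + (x : ℝ)) *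
              (∑ k ∈ Finset.range n,
                (Nat.choose (n - 1) k : ℝ) *
                  (Nat.choose (2 * (n - 1) - k + (t - x) - 1) (t - x) : ℝ)) /
              (∑ k ∈ Finset.range (n + 1),
                (Nat.choose n k : ℝ) * (Nat.choose (2 * n - k + t - 1) t : ℝ))
          else 0) *
          ((θ ^ 2 / (1 + θ)) ^ n *
            (∑ k ∈ Finset.range (n + 1),
              (Nat.choose n k : ℝ) * (Nat.choose (2 * n - k + t - 1) t : ℝ)) *
            (1 - θ) ^ t) with hF
  have hFle : ∀ t, x ≤ t → F t =
      (2 + (x : ℝ)) * (θ ^ 2 / (1 + θ)) ^ n * (1 - θ) ^ x *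
        ((∑ k ∈ Finset.range n,
          (Nat.choose (n - 1) k : ℝ) *
            (Nat.choose (2 * (n - 1) - k + (t - x) - 1) (t - x) : ℝ)) * (1 - θ) ^ (t - x)) := by
    intro t ht
    have hd := (hden t).ne'
    rw [hF]
    simp only [ht, if_true]
    rw [show (1 - θ) ^ t = (1 - θ) ^ (t - x) * (1 - θ) ^ x by rw [← pow_add, Nat.sub_add_cancel ht]]
    field_simp
  have hF0 : ∀ t, t < x → F t = 0 := by
    intro t ht
    rw [hF]
    simp [Nat.not_le.mpr ht]
  -- the shifted sum
  have hsum : HasSum (fun s : ℕ => F (s + x))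
      (θ ^ 2 / (1 + θ) * (2 + (x : ℝ)) * (1 - θ) ^ x) := by
    have hbase := ndl_aux_sum (n - 1) (by omega) ⟨hθ0, hθ1⟩
    have hmn : n - 1 + 1 = n := by omega
    rw [hmn] at hbase
    have h := hbase.mul_left ((2 + (x : ℝ)) * (θ ^ 2 / (1 + θ)) ^ n * (1 - θ) ^ x)
    have heq : (fun s : ℕ => (2 + (x : ℝ)) * (θ ^ 2 / (1 + θ)) ^ n * (1 - θ) ^ x *
        ((∑ k ∈ Finset.range n,
          (Nat.choose (n - 1) k : ℝ) *
            (Nat.choose (2 * (n - 1) - k + s - 1) s : ℝ)) * (1 - θ) ^ s))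
        = fun s : ℕ => F (s + x) := by
      funext s
      rw [hFle (s + x) (by omega)]
      congr 2 <;> rw [show s + x - x = s by omega]
    rw [heq] at h
    have hpow : (θ ^ 2 / (1 + θ)) ^ n * ((1 + θ) / θ ^ 2) ^ (n - 1) = θ ^ 2 / (1 + θ) := by
      have h1 : θ ^ 2 / (1 + θ) * ((1 + θ) / θ ^ 2) = 1 := by
        field_simp
      calc (θ ^ 2 / (1 + θ)) ^ n * ((1 + θ) / θ ^ 2) ^ (n - 1)
          = (θ ^ 2 / (1 + θ)) ^ ((n - 1) + 1) * ((1 + θ) / θ ^ 2) ^ (n - 1) := by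
            rw [show n - 1 + 1 = n by omega]
        _ = θ ^ 2 / (1 + θ) * (θ ^ 2 / (1 + θ) * ((1 + θ) / θ ^ 2)) ^ (n - 1) := by
            rw [pow_succ, mul_pow]; ring
        _ = θ ^ 2 / (1 + θ) := by rw [h1, one_pow, mul_one]
    suffices hv : θ ^ 2 / (1 + θ) * (2 + (x : ℝ)) * (1 - θ) ^ x = (2 + (x : ℝ)) * (θ ^ 2 / (1 + θ)) ^ n * (1 - θ) ^ x * ((1 + θ) / θ ^ 2) ^ (n - 1) by
      rw [hv]; exact h
    calc θ ^ 2 / (1 + θ) * (2 + (x : ℝ)) * (1 - θ) ^ x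
        = (θ ^ 2 / (1 + θ)) ^ n * ((1 + θ) / θ ^ 2) ^ (n - 1) * (2 + (x : ℝ)) * (1 - θ) ^ x := by
          rw [hpow]
      _ = (2 + (x : ℝ)) * (θ ^ 2 / (1 + θ)) ^ n * (1 - θ) ^ x * ((1 + θ) / θ ^ 2) ^ (n - 1) := by
          ring
  -- transfer via hasSum_nat_add_iff
  have h2 := (hasSum_nat_add_iff (f := F) x).mp hsum
  have hz : ∑ i ∈ Finset.range x, F i = 0 :=
    Finset.sum_eq_zero fun i hi => hF0 i (Finset.mem_range.mp hi)
  rw [hz, add_zero] at h2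
  exact h2
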